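/- Let 1 ≤ d ≤ n be integers and let A ∈ 𝒜_{n,d}. Then the number |F_A| of quadruples (i,j,k,ℓ) in which a simple switching can be performed on A satisfies n(n−d)d² − nd(d−1)² ≤ |F_A| ≤ n(n−d)d² (the left-hand side interpreted as an integer, possibly negative). -/

import Mathlib

open Matrix

/-- `𝒜_{n,d}`: 0/1 matrices with exactly `d` ones in every row and column. -/
def IsRegAdj (n d : ℕ) (A : Matrix (Fin n) (Fin n) ℝ) : Prop :=
  (∀ i j, A i j = 0 ∨ A i j = 1) ∧
  (∀ i, {j : Fin n | A i j = 1}.ncard = d) ∧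
  (∀ j, {i : Fin n | A i j = 1}.ncard = d)

/-- A simple switching can be performed in `(i, j, k, l)`. -/
def CanSwitch {n : ℕ} (A : Matrix (Fin n) (Fin n) ℝ) (i j k l : Fin n) : Prop :=
  A i k = 1 ∧ A j l = 1 ∧ A i l = 0 ∧ A j k = 0

/-- The matrix obtained from `A` by the simple switching in `(i, j, k, l)`. -/
def switch {n : ℕ} (A : Matrix (Fin n) (Fin n) ℝ) (i j k l : Fin n) :
    Matrix (Fin n) (Fin n) ℝ :=
  Matrix.of fun s t =>
    if (s = i ∧ t = k) ∨ (s = j ∧ t = l) then 0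
    else if (s = i ∧ t = l) ∨ (s = j ∧ t = k) then 1
    else A s t

/-- `F_{i,j}(A)`: the span of the rows of `A` other than the `i`-th and the `j`-th,
together with `R_i + R_j`. -/
def rowSpanF {n : ℕ} (A : Matrix (Fin n) (Fin n) ℝ) (i j : Fin n) :
    Submodule ℝ (Fin n → ℝ) :=
  Submodule.span ℝ (insert (A i + A j) {r : Fin n → ℝ | ∃ s, s ≠ i ∧ s ≠ j ∧ r = A s})

/-- Orthogonal complement w.r.t. the standard inner product on `ℝⁿ`. -/
def perp {n : ℕ} (F : Submodule ℝ (Fin n → ℝ)) : Submodule ℝ (Fin n → ℝ) where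
  carrier := {x | ∀ v ∈ F, v ⬝ᵥ x = 0}
  zero_mem' := by intro v hv; simp
  add_mem' := by intro a b ha hb v hv; simp [dotProduct_add, ha v hv, hb v hv]
  smul_mem' := by intro c x hx v hv; simp [dotProduct_smul, hx v hv]

/-- `A` is `β`-delocalized: no level set of a nonzero null vector (of `A` or `Aᵀ`)
has more than `β` coordinates. -/
def Delocalized {n : ℕ} (β : ℝ) (A : Matrix (Fin n) (Fin n) ℝ) : Prop :=
  ∀ x : Fin n → ℝ, x ≠ 0 →
    (x ∈ LinearMap.ker A.mulVecLin ∨ x ∈ LinearMap.ker Aᵀ.mulVecLin) →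
    ∀ lam : ℝ, ({i : Fin n | x i = lam}.ncard : ℝ) ≤ β

/-- auxiliary: number of rows with 1 in column `k` and 0 in column `l` -/
private noncomputable def aKL {n : ℕ} (A : Matrix (Fin n) (Fin n) ℝ) (k l : Fin n) : ℕ :=
  (Finset.univ.filter fun i => A i k = 1 ∧ A i l = 0).card

/-- auxiliary: number of rows with 1 in both columns `k` and `l` -/
private noncomputable def nKL {n : ℕ} (A : Matrix (Fin n) (Fin n) ℝ) (k l : Fin n) : ℕ :=
  (Finset.univ.filter fun i => A i k = 1 ∧ A i l = 1).card


/-- bounds on the number of possible switchings. -/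
theorem stmt_3 (n d : ℕ) (hd : 1 ≤ d) (hdn : d ≤ n)
    (A : Matrix (Fin n) (Fin n) ℝ) (hA : IsRegAdj n d A) :
    (n : ℤ) * ((n : ℤ) - d) * d ^ 2 - n * d * ((d : ℤ) - 1) ^ 2 ≤
      ({q : Fin n × Fin n × Fin n × Fin n |
          CanSwitch A q.1 q.2.1 q.2.2.1 q.2.2.2}.ncard : ℤ) ∧
    ({q : Fin n × Fin n × Fin n × Fin n |
        CanSwitch A q.1 q.2.1 q.2.2.1 q.2.2.2}.ncard : ℤ) ≤
      (n : ℤ) * ((n : ℤ) - d) * d ^ 2 := by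
  classical
  obtain ⟨h01, hrow, hcol⟩ := hA
  -- Finset versions of row/column counts
  have hrowF : ∀ i, (Finset.univ.filter fun j => A i j = 1).card = d := by
    intro i
    have := hrow i
    rwa [Set.ncard_eq_toFinset_card', Set.toFinset_setOf] at this
  have hcolF : ∀ k, (Finset.univ.filter fun i => A i k = 1).card = d := by
    intro k
    have := hcol k
    rwa [Set.ncard_eq_toFinset_card', Set.toFinset_setOf] at this
  -- zero counts in a row
  have hrow0 : ∀ i, (Finset.univ.filter fun j => A i j = 0).card = n - d := by
    intro i
    have h1 := Finset.card_filter_add_card_filter_not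
      (s := (Finset.univ : Finset (Fin n))) (p := fun j => A i j = 0)
    have h2 : (Finset.univ.filter fun j => ¬ A i j = 0) =
        (Finset.univ.filter fun j => A i j = 1) := by
      apply Finset.filter_congr
      intro j _
      rcases h01 i j with h | h <;> simp [h]
    rw [h2, hrowF i, Finset.card_univ, Fintype.card_fin] at h1
    omega
  -- a + N = d
  have haN : ∀ k l, aKL A k l + nKL A k l = d := by
    intro k l
    have h1 := Finset.card_filter_add_card_filter_not
      (s := (Finset.univ.filter fun i => A i k = 1)) (p := fun i => A i l = 0)
    have h2 : ((Finset.univ.filter fun i => A i k = 1).filter fun i => A i l = 0) =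
        (Finset.univ.filter fun i => A i k = 1 ∧ A i l = 0) := by
      rw [Finset.filter_filter]
    have h3 : ((Finset.univ.filter fun i => A i k = 1).filter fun i => ¬ A i l = 0) =
        (Finset.univ.filter fun i => A i k = 1 ∧ A i l = 1) := by
      rw [Finset.filter_filter]
      apply Finset.filter_congr
      intro i _
      rcases h01 i l with h | h <;> simp [h]
    rw [h2, h3, hcolF k] at h1
    exact h1
  -- symmetry of N
  have hNsymm : ∀ k l, nKL A k l = nKL A l k := by
    intro k l
    unfold nKL
    congr 1
    apply Finset.filter_congr
    intro i _
    exact and_comm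
  -- diagonal of N
  have hNdiag : ∀ k, nKL A k k = d := by
    intro k
    unfold nKL
    simp only [and_self]
    exact hcolF k
  -- row sums of a
  have hasum : ∀ k, ∑ l, aKL A k l = d * (n - d) := by
    intro k
    have hrepr : ∀ l, aKL A k l =
        ∑ i ∈ (Finset.univ.filter fun i => A i k = 1), if A i l = 0 then 1 else 0 := by
      intro l
      unfold aKL
      rw [← Finset.filter_filter, Finset.card_filter]
    calc ∑ l, aKL A k l
        = ∑ l, ∑ i ∈ (Finset.univ.filter fun i => A i k = 1),
            if A i l = 0 then 1 else 0 := by simp only [hrepr]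
      _ = ∑ i ∈ (Finset.univ.filter fun i => A i k = 1), ∑ l,
            if A i l = 0 then 1 else 0 := Finset.sum_comm
      _ = ∑ i ∈ (Finset.univ.filter fun i => A i k = 1), (n - d) := by
          apply Finset.sum_congr rfl
          intro i _
          rw [← Finset.card_filter]
          exact hrow0 i
      _ = d * (n - d) := by rw [Finset.sum_const, hcolF k, smul_eq_mul]
  -- row sums of N
  have hNsum : ∀ k, ∑ l, nKL A k l = d * d := by
    intro k
    have hrepr : ∀ l, nKL A k l =
        ∑ i ∈ (Finset.univ.filter fun i => A i k = 1), if A i l = 1 then 1 else 0 := by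
      intro l
      unfold nKL
      rw [← Finset.filter_filter, Finset.card_filter]
    calc ∑ l, nKL A k l
        = ∑ l, ∑ i ∈ (Finset.univ.filter fun i => A i k = 1),
            if A i l = 1 then 1 else 0 := by simp only [hrepr]
      _ = ∑ i ∈ (Finset.univ.filter fun i => A i k = 1), ∑ l,
            if A i l = 1 then 1 else 0 := Finset.sum_comm
      _ = ∑ i ∈ (Finset.univ.filter fun i => A i k = 1), d := by
          apply Finset.sum_congr rfl
          intro i _
          rw [← Finset.card_filter]
          exact hrowF i
      _ = d * d := by rw [Finset.sum_const, hcolF k, smul_eq_mul]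
  -- structural identity
  have key : ({q : Fin n × Fin n × Fin n × Fin n |
      CanSwitch A q.1 q.2.1 q.2.2.1 q.2.2.2}.ncard)
      = ∑ k, ∑ l, aKL A k l * aKL A l k := by
    rw [Set.ncard_eq_toFinset_card', Set.toFinset_setOf]
    rw [Finset.card_eq_sum_card_fiberwise
      (f := fun q : Fin n × Fin n × Fin n × Fin n => q.2.2)
      (t := (Finset.univ : Finset (Fin n × Fin n))) (fun _ _ => Finset.mem_univ _)]
    rw [← Finset.univ_product_univ, Finset.sum_product]
    apply Finset.sum_congr rfl; intro k _
    apply Finset.sum_congr rfl; intro l _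
    have : aKL A k l * aKL A l k =
        ((Finset.univ.filter fun i => A i k = 1 ∧ A i l = 0) ×ˢ
         (Finset.univ.filter fun j => A j l = 1 ∧ A j k = 0)).card := by
      rw [Finset.card_product]; rfl
    rw [this]
    refine Finset.card_bij' (fun q _ => (q.1, q.2.1)) (fun p _ => (p.1, p.2, k, l))
      ?_ ?_ ?_ ?_
    · rintro ⟨i, j, k', l'⟩ hq
      rw [Finset.mem_filter, Finset.mem_filter] at hq
      simp only [Finset.mem_filter, Finset.mem_univ, true_and, CanSwitch,
        Prod.mk.injEq] at hq
      obtain ⟨⟨h1, h2, h3, h4⟩, rfl, rfl⟩ := hq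
      simp only [Finset.mem_product, Finset.mem_filter, Finset.mem_univ, true_and]
      exact ⟨⟨h1, h3⟩, ⟨h2, h4⟩⟩
    · rintro ⟨a, b⟩ hp
      simp only [Finset.mem_product, Finset.mem_filter, Finset.mem_univ, true_and] at hp
      rw [Finset.mem_filter, Finset.mem_filter]
      simp only [Finset.mem_filter, Finset.mem_univ, true_and, CanSwitch]
      exact ⟨⟨hp.1.1, hp.2.1, hp.1.2, hp.2.2⟩, trivial⟩
    · rintro ⟨i, j, k', l'⟩ hq
      simp only [Finset.mem_filter, Prod.mk.injEq] at hq
      obtain ⟨-, rfl, rfl⟩ := hq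
      rfl
    · rintro ⟨a, b⟩ _
      rfl
  -- cast everything to ℤ
  have hcast : (({q : Fin n × Fin n × Fin n × Fin n |
      CanSwitch A q.1 q.2.1 q.2.2.1 q.2.2.2}.ncard : ℤ))
      = ∑ k, ∑ l, (aKL A k l : ℤ) * (aKL A l k : ℤ) := by
    rw [key]; push_cast; ring
  have haZ : ∀ k l, (aKL A k l : ℤ) = (d : ℤ) - (nKL A k l : ℤ) := by
    intro k l
    have := haN k l
    omega
  constructor
  · -- lower bound
    rw [hcast]
    have hpt : ∀ k l, (d : ℤ) * (aKL A k l : ℤ) -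
        ((d : ℤ) - 1) * ((nKL A k l : ℤ) - if k = l then (d : ℤ) else 0)
        ≤ (aKL A k l : ℤ) * (aKL A l k : ℤ) := by
      intro k l
      by_cases hkl : k = l
      · subst hkl
        have h1 : aKL A k k = 0 := by have := haN k k; have := hNdiag k; omega
        simp [h1, hNdiag k]
      · simp only [hkl, if_false, sub_zero]
        have h1 := haZ k l
        have h2 : (aKL A l k : ℤ) = (d : ℤ) - (nKL A k l : ℤ) := by
          rw [haZ l k, hNsymm l k]
        have h3 : (nKL A k l : ℤ) ≤ (nKL A k l : ℤ) ^ 2 := by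
          exact_mod_cast Nat.le_self_pow two_ne_zero (nKL A k l)
        nlinarith [h3]
    have hsum : ∀ k, ∑ l, ((d : ℤ) * (aKL A k l : ℤ) -
        ((d : ℤ) - 1) * ((nKL A k l : ℤ) - if k = l then (d : ℤ) else 0))
        = (d : ℤ) * ((d : ℤ) * ((n : ℤ) - d)) -
          ((d : ℤ) - 1) * ((d : ℤ) * d - d) := by
      intro k
      rw [Finset.sum_sub_distrib, ← Finset.mul_sum, ← Finset.mul_sum]
      have e1 : ∑ l, (aKL A k l : ℤ) = (d : ℤ) * ((n : ℤ) - d) := by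
        have h := hasum k
        zify [hdn] at h
        exact h
      have e2 : ∑ l, (((nKL A k l : ℤ)) - if k = l then (d : ℤ) else 0)
          = (d : ℤ) * d - d := by
        rw [Finset.sum_sub_distrib]
        have e2a : ∑ l, (nKL A k l : ℤ) = (d : ℤ) * d := by
          have h := hNsum k
          zify at h
          exact h
        have e2b : ∑ l, (if k = l then (d : ℤ) else 0) = (d : ℤ) := by
          rw [Finset.sum_ite_eq]
          simp
        rw [e2a, e2b]
      rw [e1, e2]
    calc (n : ℤ) * ((n : ℤ) - d) * d ^ 2 - n * d * ((d : ℤ) - 1) ^ 2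
        = ∑ _k : Fin n, ((d : ℤ) * ((d : ℤ) * ((n : ℤ) - d)) -
          ((d : ℤ) - 1) * ((d : ℤ) * d - d)) := by
          rw [Finset.sum_const, Finset.card_univ, Fintype.card_fin, nsmul_eq_mul]
          ring
      _ = ∑ k, ∑ l, ((d : ℤ) * (aKL A k l : ℤ) -
          ((d : ℤ) - 1) * ((nKL A k l : ℤ) - if k = l then (d : ℤ) else 0)) := by
          apply Finset.sum_congr rfl
          intro k _
          exact (hsum k).symm
      _ ≤ ∑ k, ∑ l, (aKL A k l : ℤ) * (aKL A l k : ℤ) := by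
          apply Finset.sum_le_sum
          intro k _
          apply Finset.sum_le_sum
          intro l _
          exact hpt k l
  · -- upper bound
    rw [hcast]
    have hpt : ∀ k l, (aKL A k l : ℤ) * (aKL A l k : ℤ) ≤ (aKL A k l : ℤ) * d := by
      intro k l
      have h1 : aKL A l k ≤ d := by have := haN l k; omega
      have h0 : (0 : ℤ) ≤ (aKL A k l : ℤ) := Int.natCast_nonneg _
      have : (aKL A l k : ℤ) ≤ (d : ℤ) := by exact_mod_cast h1
      nlinarith
    calc ∑ k, ∑ l, (aKL A k l : ℤ) * (aKL A l k : ℤ)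
        ≤ ∑ k, ∑ l, (aKL A k l : ℤ) * d := by
          apply Finset.sum_le_sum; intro k _
          apply Finset.sum_le_sum; intro l _
          exact hpt k l
      _ = ∑ k : Fin n, ((d : ℤ) * ((n : ℤ) - d) * d) := by
          apply Finset.sum_congr rfl
          intro k _
          rw [← Finset.sum_mul]
          congr 1
          have h := hasum k
          zify [hdn] at h
          exact h
      _ = (n : ℤ) * ((n : ℤ) - d) * d ^ 2 := by
          rw [Finset.sum_const, Finset.card_univ, Fintype.card_fin, nsmul_eq_mul]
          ring
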